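/- Define polynomials F_j^n(λ,q) = Σ_{α ∈ T_j^n} Π_{s=1}^j (λ - q_{α_s}), with F_0^n = 1. Then for 1 ≤ j ≤ n-1 the recursion F_{j+1}^{n+2}(λ,q) = (λ - q_{n+2}) F_j^{n+1}(λ,q) + F_{j+1}^n(λ,q) holds. -/

import Mathlib

/-- The predicate describing membership in `T_j^n`: `α` is strictly increasing,
`1 ≤ α s ≤ n`, and with `α (j+1) := n+1` every consecutive difference is odd. -/
def isT (j n : ℕ) (α : Fin j → ℕ) : Prop :=
  StrictMono α ∧ (∀ s, 1 ≤ α s ∧ α s ≤ n) ∧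
    ∀ s : Fin j,
      Odd ((if h : (s : ℕ) + 1 < j then (α ⟨(s : ℕ) + 1, h⟩ : ℤ) else (n : ℤ) + 1)
        - (α s : ℤ))

open Classical in
/-- `Fpoly j n lam q = F_j^n(λ,q) = Σ_{α ∈ T_j^n} Π_{s=1}^j (λ - q (α s))`,
with `F_0^n = 1`. -/
noncomputable def Fpoly (j n : ℕ) (lam : ℂ) (q : ℕ → ℂ) : ℂ :=
  ∑ β : Fin j → Fin (n + 2),
    if isT j n (fun s => (β s : ℕ)) then ∏ s, (lam - q (β s)) else 0

lemma strictMono_snoc_iff {j : ℕ} {g : Fin j → ℕ} {x : ℕ} :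
    StrictMono (Fin.snoc g x : Fin (j+1) → ℕ) ↔ StrictMono g ∧ ∀ i, g i < x := by
  constructor
  · intro h
    refine ⟨fun a b hab => ?_, fun i => ?_⟩
    · have := h (Fin.castSucc_lt_castSucc_iff.2 hab); simpa using this
    · have := h (Fin.castSucc_lt_last i); simpa using this
  · rintro ⟨h1, h2⟩ a b hab
    rcases Fin.eq_castSucc_or_eq_last b with ⟨b', rfl⟩ | rfl
    · obtain ⟨a', rfl⟩ := Fin.exists_castSucc_eq.2
        (Fin.ne_last_of_lt (hab.trans_le (Fin.le_last _)))
      simp only [Fin.snoc_castSucc]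
      exact h1 (Fin.castSucc_lt_castSucc_iff.1 hab)
    · obtain ⟨a', rfl⟩ := Fin.exists_castSucc_eq.2 (Fin.ne_last_of_lt hab)
      simp only [Fin.snoc_castSucc, Fin.snoc_last]
      exact h2 a'

lemma snoc_mk_eq {j : ℕ} (g : Fin j → ℕ) (x : ℕ) (i : Fin j) (h' : (i : ℕ) + 1 < j + 1) :
    (Fin.snoc g x : Fin (j+1) → ℕ) ⟨(i : ℕ) + 1, h'⟩
      = if h : (i : ℕ) + 1 < j then g ⟨(i : ℕ) + 1, h⟩ else x := by
  by_cases h : (i : ℕ) + 1 < j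
  · rw [dif_pos h]
    have : (⟨(i : ℕ) + 1, h'⟩ : Fin (j+1)) = Fin.castSucc ⟨(i : ℕ) + 1, h⟩ := rfl
    rw [this, Fin.snoc_castSucc]
  · rw [dif_neg h]
    have hij : (i : ℕ) + 1 = j := by have := i.isLt; omega
    have : (⟨(i : ℕ) + 1, h'⟩ : Fin (j+1)) = Fin.last j := by
      apply Fin.ext; simpa using hij
    rw [this, Fin.snoc_last]

lemma isT_snoc (j n : ℕ) (g : Fin j → ℕ) :
    isT (j+1) (n+2) (Fin.snoc g (n+2)) ↔ isT j (n+1) g := by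
  constructor
  · rintro ⟨hm, hb, ho⟩
    obtain ⟨hmg, hlt⟩ := strictMono_snoc_iff.1 hm
    refine ⟨hmg, fun s => ?_, fun i => ?_⟩
    · have h1 := (hb (Fin.castSucc s)).1
      rw [Fin.snoc_castSucc] at h1
      have h2 := hlt s
      exact ⟨h1, by omega⟩
    · have hcond : ((Fin.castSucc i : Fin (j+1)) : ℕ) + 1 < j + 1 := by
        simpa using i.isLt
      have := ho (Fin.castSucc i)
      rw [dif_pos hcond] at this
      simp only [Fin.coe_castSucc] at this
      rw [snoc_mk_eq, Fin.snoc_castSucc] at this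
      by_cases h : (i : ℕ) + 1 < j
      · rw [dif_pos h] at this
        rw [dif_pos h]
        exact this
      · rw [dif_neg h] at this
        rw [dif_neg h]
        rw [Int.odd_iff] at this ⊢
        push_cast at this ⊢
        omega
  · rintro ⟨hm, hb, ho⟩
    refine ⟨strictMono_snoc_iff.2 ⟨hm, fun i => by have := (hb i).2; omega⟩,
      fun s => ?_, fun s => ?_⟩
    · refine Fin.lastCases ?_ (fun i => ?_) s
      · rw [Fin.snoc_last]; omega
      · rw [Fin.snoc_castSucc]
        have := hb i; omega
    · refine Fin.lastCases ?_ (fun i => ?_) s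
      · rw [dif_neg (by simp)]
        rw [Fin.snoc_last, Int.odd_iff]
        push_cast
        omega
      · have hcond : ((Fin.castSucc i : Fin (j+1)) : ℕ) + 1 < j + 1 := by
          simpa using i.isLt
        rw [dif_pos hcond]
        simp only [Fin.coe_castSucc]
        rw [snoc_mk_eq, Fin.snoc_castSucc]
        have := ho i
        by_cases h : (i : ℕ) + 1 < j
        · rw [dif_pos h] at this; rw [dif_pos h]; exact this
        · rw [dif_neg h] at this; rw [dif_neg h]
          rw [Int.odd_iff] at this ⊢
          push_cast at this ⊢
          omega

lemma isT_ne (j n : ℕ) (g : Fin (j+1) → ℕ) (hlast : g (Fin.last j) ≠ n + 2) :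
    isT (j+1) (n+2) g ↔ isT (j+1) n g := by
  have hodd : ∀ s : Fin (j+1), ∀ m : ℕ,
      (if h : (s : ℕ) + 1 < j + 1 then (g ⟨(s : ℕ) + 1, h⟩ : ℤ) else ((m:ℤ)) + 1)
        = if h : (s : ℕ) + 1 < j + 1 then (g ⟨(s : ℕ) + 1, h⟩ : ℤ) else ((m:ℤ)) + 1 :=
    fun _ _ => rfl
  constructor
  · rintro ⟨hm, hb, ho⟩
    have hlast_le : g (Fin.last j) ≤ n := by
      have h1 := (hb (Fin.last j)).2
      have h2 := ho (Fin.last j)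
      rw [dif_neg (by simp)] at h2
      rw [Int.odd_iff] at h2
      push_cast at h2
      omega
    refine ⟨hm, fun s => ⟨(hb s).1, ?_⟩, fun s => ?_⟩
    · have := hm.monotone (Fin.le_last s); omega
    · have := ho s
      by_cases h : (s : ℕ) + 1 < j + 1
      · rw [dif_pos h] at this ⊢; exact this
      · rw [dif_neg h] at this ⊢
        rw [Int.odd_iff] at this ⊢
        push_cast at this ⊢
        omega
  · rintro ⟨hm, hb, ho⟩
    refine ⟨hm, fun s => ⟨(hb s).1, by have := (hb s).2; omega⟩, fun s => ?_⟩
    have := ho s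
    by_cases h : (s : ℕ) + 1 < j + 1
    · rw [dif_pos h] at this ⊢; exact this
    · rw [dif_neg h] at this ⊢
      rw [Int.odd_iff] at this ⊢
      push_cast at this ⊢
      omega

lemma coe_snoc {j m : ℕ} (b : Fin j → Fin m) (x : Fin m) :
    (fun s => (((Fin.snoc b x : Fin (j+1) → Fin m)) s : ℕ))
      = Fin.snoc (fun s => (b s : ℕ)) (x : ℕ) := by
  funext s
  refine Fin.lastCases ?_ (fun i => ?_) s <;> simp

open Classical in
noncomputable def Fterm (jj nn m : ℕ) (lam : ℂ) (q : ℕ → ℂ) (β : Fin jj → Fin m) : ℂ :=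
  if isT jj nn (fun s => (β s : ℕ)) then ∏ s, (lam - q (β s)) else 0

open Classical in
lemma Fpoly_eq (j n m : ℕ) (h : n + 2 ≤ m) (lam : ℂ) (q : ℕ → ℂ) :
    Fpoly j n lam q = ∑ β : Fin j → Fin m, Fterm j n m lam q β := by
  simp only [Fterm]
  set f : (Fin j → Fin m) → ℂ := fun β =>
    if isT j n (fun s => (β s : ℕ)) then ∏ s, (lam - q (β s)) else 0 with hf
  have einj : Function.Injective
      (fun (β : Fin j → Fin (n+2)) (s : Fin j) => Fin.castLE h (β s)) := by
    intro β γ hβγ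
    funext s
    exact Fin.castLE_injective h (congrFun hβγ s)
  calc Fpoly j n lam q
      = ∑ β : Fin j → Fin (n+2), f (fun s => Fin.castLE h (β s)) := by
        apply Finset.sum_congr rfl
        intro β _
        simp [hf, Fin.coe_castLE]
    _ = ∑ γ ∈ Finset.univ.map ⟨_, einj⟩, f γ := by
        rw [Finset.sum_map]
        rfl
    _ = ∑ γ : Fin j → Fin m, f γ := by
        apply Finset.sum_subset (Finset.subset_univ _)
        intro γ _ hγ
        show (if isT j n (fun s => (γ s : ℕ)) then ∏ s, (lam - q (γ s)) else 0) = 0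
        rw [if_neg]
        intro ⟨_, hb, _⟩
        apply hγ
        rw [Finset.mem_map]
        have hall : ∀ s, (γ s : ℕ) < n + 2 := fun s => by
          have h2 : (γ s : ℕ) ≤ n := (hb s).2
          omega
        refine ⟨fun s => ⟨(γ s : ℕ), hall s⟩, Finset.mem_univ _, ?_⟩
        funext s
        exact Fin.ext rfl

lemma reindex_snoc {κ : Type*} [Fintype κ] (j : ℕ) (G : (Fin (j+1) → κ) → ℂ) :
    ∑ β, G β = ∑ x : κ, ∑ b : Fin j → κ, G (Fin.snoc b x) := by
  rw [← Equiv.sum_comp (Fin.snocEquiv (fun _ : Fin (j+1) => κ)) G, Fintype.sum_prod_type]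
  rfl

lemma prod_snoc {j m : ℕ} (lam : ℂ) (q : ℕ → ℂ) (b : Fin j → Fin m) (x : Fin m) :
    ∏ s : Fin (j+1), (lam - q (((Fin.snoc b x : Fin (j+1) → Fin m)) s))
      = (∏ s : Fin j, (lam - q (b s))) * (lam - q x) := by
  rw [Fin.prod_univ_castSucc]
  simp

theorem Fpoly_recursion (j n : ℕ) (hj : 1 ≤ j) (hn : j ≤ n - 1) (lam : ℂ) (q : ℕ → ℂ) :
    Fpoly (j + 1) (n + 2) lam q
      = (lam - q (n + 2)) * Fpoly j (n + 1) lam q + Fpoly (j + 1) n lam q := by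
  classical
  rw [Fpoly_eq (j+1) (n+2) (n+4) (by omega) lam q,
      Fpoly_eq j (n+1) (n+4) (by omega) lam q,
      Fpoly_eq (j+1) n (n+4) (by omega) lam q,
      reindex_snoc j (Fterm (j+1) (n+2) (n+4) lam q),
      reindex_snoc j (Fterm (j+1) n (n+4) lam q)]
  set x0 : Fin (n+4) := ⟨n+2, by omega⟩ with hx0
  rw [← Finset.add_sum_erase Finset.univ
        (fun x => ∑ b : Fin j → Fin (n+4), Fterm (j+1) (n+2) (n+4) lam q (Fin.snoc b x))
        (Finset.mem_univ x0),
      ← Finset.add_sum_erase Finset.univ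
        (fun x => ∑ b : Fin j → Fin (n+4), Fterm (j+1) n (n+4) lam q (Fin.snoc b x))
        (Finset.mem_univ x0)]
  have hFx0 : ∀ b : Fin j → Fin (n+4),
      Fterm (j+1) (n+2) (n+4) lam q (Fin.snoc b x0)
        = (lam - q (n+2)) * Fterm j (n+1) (n+4) lam q b := by
    intro b
    simp only [Fterm]
    rw [coe_snoc]
    have hx0n : ((x0 : Fin (n+4)) : ℕ) = n + 2 := rfl
    rw [hx0n, isT_snoc]
    by_cases hc : isT j (n+1) (fun s => (b s : ℕ))
    · rw [if_pos hc, if_pos hc, prod_snoc, hx0n]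
      ring
    · rw [if_neg hc, if_neg hc, mul_zero]
  have hHx0 : ∀ b : Fin j → Fin (n+4),
      Fterm (j+1) n (n+4) lam q (Fin.snoc b x0) = 0 := by
    intro b
    simp only [Fterm]
    rw [if_neg]
    rintro ⟨_, hb, _⟩
    have h2 : ((Fin.snoc b x0 : Fin (j+1) → Fin (n+4)) (Fin.last j) : ℕ) ≤ n :=
      (hb (Fin.last j)).2
    rw [Fin.snoc_last] at h2
    have : ((x0 : Fin (n+4)) : ℕ) = n + 2 := rfl
    omega
  have hFH : ∀ x ∈ Finset.univ.erase x0, ∀ b : Fin j → Fin (n+4),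
      Fterm (j+1) (n+2) (n+4) lam q (Fin.snoc b x)
        = Fterm (j+1) n (n+4) lam q (Fin.snoc b x) := by
    intro x hx b
    have hxne : (x : ℕ) ≠ n + 2 := by
      intro hc
      exact (Finset.mem_erase.1 hx).1 (Fin.ext hc)
    simp only [Fterm]
    rw [coe_snoc]
    refine if_congr (isT_ne j n _ ?_) rfl rfl
    rw [Fin.snoc_last]
    exact hxne
  have s1 : ∑ b : Fin j → Fin (n+4), Fterm (j+1) (n+2) (n+4) lam q (Fin.snoc b x0)
      = (lam - q (n+2)) * ∑ b : Fin j → Fin (n+4), Fterm j (n+1) (n+4) lam q b := by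
    rw [Finset.mul_sum]
    exact Finset.sum_congr rfl fun b _ => hFx0 b
  have s2 : ∑ b : Fin j → Fin (n+4), Fterm (j+1) n (n+4) lam q (Fin.snoc b x0) = 0 :=
    Finset.sum_eq_zero fun b _ => hHx0 b
  have s3 : ∑ x ∈ Finset.univ.erase x0, ∑ b : Fin j → Fin (n+4),
        Fterm (j+1) (n+2) (n+4) lam q (Fin.snoc b x)
      = ∑ x ∈ Finset.univ.erase x0, ∑ b : Fin j → Fin (n+4),
        Fterm (j+1) n (n+4) lam q (Fin.snoc b x) :=
    Finset.sum_congr rfl fun x hx => Finset.sum_congr rfl fun b _ => hFH x hx b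
  rw [s1, s2, s3]
  ring
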